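/- Let F : 2^E → ℝ≥0 be a monotone submodular function with F(∅) = 0 on a finite ground set E, and let G = (E, 𝒢) be a graph on E encoding pairwise conflict constraints in which every vertex has degree at most Δ with Δ ≥ 1. Let Ŝ be the output of the greedy algorithm that repeatedly adds the feasible element with the largest marginal gain and removes it and all its neighbors from consideration, stopping after k additions or when no candidates remain. Let S* be any independent set in G of size at most k maximizing F. Then F(Ŝ) ≥ F(S*) / (1 + Δ). -/

import Mathlib

open Classical in
/-- The greedy procedure: at each step add the candidate maximizing `F (insert x S)`,
then remove it and all its `G`-neighbors from the candidate pool. -/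
noncomputable def greedy {E : Type} [DecidableEq E] (F : Finset E → ℝ) (G : SimpleGraph E) :
    ℕ → Finset E → Finset E → Finset E
  | 0, _, S => S
  | (k + 1), Q, S =>
    if h : Q.Nonempty then
      let x := Classical.choose (Q.exists_max_image (fun y => F (insert y S)) h)
      greedy F G k ((Q \ Q.filter (fun y => G.Adj x y)).erase x) (insert x S)
    else S

/-- the greedy solution is a `(1 + Δ)`-approximation to the best independent
set of size at most `k` for a monotone submodular `F`, when `G` has max degree `≤ Δ`, `Δ ≥ 1`. -/
private lemma marg_sum {E : Type} [DecidableEq E] (F : Finset E → ℝ)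
    (hFsub : ∀ S T : Finset E, S ⊆ T → ∀ e : E,
      F (insert e T) - F T ≤ F (insert e S) - F S)
    (S : Finset E) :
    ∀ (D B : Finset E), S ⊆ B → F (B ∪ D) - F B ≤ ∑ d ∈ D, (F (insert d S) - F S) := by
  intro D
  induction D using Finset.induction_on with
  | empty => intro B hB; simp
  | insert _ _ ha ih =>
    rename_i a D
    intro B hB
    rw [Finset.sum_insert ha]
    have h1 : F (B ∪ insert a D) - F (B ∪ D) ≤ F (insert a S) - F S := by
      have he : B ∪ insert a D = insert a (B ∪ D) := by
        ext b; simp [or_assoc, or_left_comm]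
      rw [he]
      exact hFsub S (B ∪ D) (hB.trans Finset.subset_union_left) a
    have h2 := ih B hB
    linarith

open Classical in
private lemma greedy_key {E : Type} [DecidableEq E] (F : Finset E → ℝ)
    (hFmono : ∀ S T : Finset E, S ⊆ T → F S ≤ F T)
    (hFsub : ∀ S T : Finset E, S ⊆ T → ∀ e : E,
      F (insert e T) - F T ≤ F (insert e S) - F S)
    (G : SimpleGraph E) (Δ : ℕ) (hΔ : 1 ≤ Δ)
    (hdeg2 : ∀ (x : E) (P : Finset E), (∀ y ∈ P, G.Adj x y) → P.card ≤ Δ) :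
    ∀ (k : ℕ) (Q S T : Finset E), T ⊆ Q → T.card ≤ k →
      F (S ∪ T) - F S ≤ (1 + (Δ : ℝ)) * (F (greedy F G k Q S) - F S) := by
  intro k
  induction k with
  | zero =>
    intro Q S T hTQ hTc
    have : T = ∅ := Finset.card_eq_zero.mp (Nat.le_zero.mp hTc)
    subst this
    simp [greedy]
  | succ k ih =>
    intro Q S T hTQ hTc
    by_cases hQ : Q.Nonempty
    · rw [greedy, dif_pos hQ]
      obtain ⟨hxQ, hxmax⟩ := Classical.choose_spec (Q.exists_max_image (fun y => F (insert y S)) hQ)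
      set x := Classical.choose (Q.exists_max_image (fun y => F (insert y S)) hQ) with hxdef
      show F (S ∪ T) - F S ≤ (1 + (Δ : ℝ)) *
        (F (greedy F G k ((Q \ Q.filter (fun y => G.Adj x y)).erase x) (insert x S)) - F S)
      set Q' : Finset E := (Q \ Q.filter (fun y => G.Adj x y)).erase x with hQ'def
      set S' : Finset E := insert x S with hS'def
      -- the key step, parametric in the discarded set D
      have key : ∀ D : Finset E, D ⊆ T → ((D.erase x).card : ℝ) ≤ (Δ : ℝ) → T \ D ⊆ Q' →
          (T \ D).card ≤ k →
          F (S ∪ T) - F S ≤ (1 + (Δ : ℝ)) * (F (greedy F G k Q' S') - F S) := by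
        intro D hDT hDc hsub hkc
        have hg : (0:ℝ) ≤ F S' - F S := by
          have := hFmono S S' (Finset.subset_insert x S); linarith
        have hgd : ∀ d ∈ T, F (insert d S) - F S ≤ F S' - F S := by
          intro d hd
          have := hxmax d (hTQ hd)
          simp only [hS'def]
          linarith
        have h0 : F (S ∪ T) ≤ F (S' ∪ T) :=
          hFmono _ _ (Finset.union_subset_union (Finset.subset_insert x S) (le_refl T))
        have hSB : S ⊆ S' ∪ (T \ D) :=
          (Finset.subset_insert x S).trans Finset.subset_union_left
        have h1 := marg_sum F hFsub S (D.erase x) (S' ∪ (T \ D)) hSB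
        have he1 : (S' ∪ (T \ D)) ∪ D.erase x = S' ∪ T := by
          ext a
          by_cases hax : a = x
          · simp [hax, hS'def]
          · have hmemD : a ∈ D → a ∈ T := fun h => hDT h
            simp only [Finset.mem_union, Finset.mem_sdiff, Finset.mem_erase]
            tauto
        rw [he1] at h1
        have hsum2 : ∑ d ∈ D.erase x, (F (insert d S) - F S) ≤ (Δ : ℝ) * (F S' - F S) := by
          have hb := Finset.sum_le_card_nsmul (D.erase x)
            (fun d => F (insert d S) - F S) (F S' - F S)
            (fun d hd => hgd d (hDT (Finset.mem_of_mem_erase hd)))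
          have hc : ((D.erase x).card : ℝ) * (F S' - F S) ≤ (Δ : ℝ) * (F S' - F S) :=
            mul_le_mul_of_nonneg_right hDc hg
          calc ∑ d ∈ D.erase x, (F (insert d S) - F S)
              ≤ ((D.erase x).card : ℝ) * (F S' - F S) := by
                simpa [nsmul_eq_mul] using hb
            _ ≤ (Δ : ℝ) * (F S' - F S) := hc
        have h3 := ih Q' S' (T \ D) hsub hkc
        have hring1 : (1 + (Δ : ℝ)) * (F (greedy F G k Q' S') - F S') =
            (1 + (Δ : ℝ)) * (F (greedy F G k Q' S') - F S)
              - (Δ : ℝ) * (F S' - F S) - (F S' - F S) := by ring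
        rw [hring1] at h3
        linarith
      -- membership fact: anything in T but not in Q' equals x or is a neighbor of x
      have hmem : ∀ d ∈ T \ Q', d = x ∨ G.Adj x d := by
        intro d hd
        rw [Finset.mem_sdiff] at hd
        obtain ⟨hdT, hdQ'⟩ := hd
        by_cases hdx : d = x
        · exact Or.inl hdx
        · right
          rw [hQ'def, Finset.mem_erase, Finset.mem_sdiff, Finset.mem_filter] at hdQ'
          push_neg at hdQ'
          exact (hdQ' hdx (hTQ hdT)).2
      have hDcard : ((T \ Q').erase x).card ≤ Δ := by
        refine hdeg2 x _ ?_
        intro y hy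
        rw [Finset.mem_erase] at hy
        rcases hmem y hy.2 with h | h
        · exact absurd h hy.1
        · exact h
      have hsdiff_sub : T \ (T \ Q') ⊆ Q' := by
        intro t ht
        rw [Finset.mem_sdiff, Finset.mem_sdiff] at ht
        push_neg at ht
        exact ht.2 ht.1
      by_cases hk : T.card ≤ k
      · refine key (T \ Q') Finset.sdiff_subset ?_ hsdiff_sub ?_
        · exact_mod_cast hDcard
        · exact le_trans (Finset.card_le_card Finset.sdiff_subset) hk
      · have hTk : T.card = k + 1 := le_antisymm hTc (Nat.lt_of_not_le hk)
        by_cases hD : (T \ Q').Nonempty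
        · refine key (T \ Q') Finset.sdiff_subset ?_ hsdiff_sub ?_
          · exact_mod_cast hDcard
          · have h1 := Finset.card_sdiff_of_subset (Finset.sdiff_subset : T \ Q' ⊆ T)
            have h2 := Finset.card_pos.mpr hD
            omega
        · -- T ⊆ Q' entirely; drop an arbitrary element
          have hTQ' : T ⊆ Q' := by
            intro t ht
            by_contra hnot
            exact hD ⟨t, Finset.mem_sdiff.mpr ⟨ht, hnot⟩⟩
          have hTne : T.Nonempty := Finset.card_pos.mp (by omega)
          obtain ⟨y, hy⟩ := hTne
          refine key {y} (Finset.singleton_subset_iff.mpr hy) ?_ ?_ ?_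
          · have hyx : y ≠ x := by
              intro h
              have := hTQ' hy
              rw [h, hQ'def, Finset.mem_erase] at this
              exact this.1 rfl
            rw [Finset.erase_eq_of_notMem (by simp [Ne.symm hyx])]
            simp only [Finset.card_singleton, Nat.cast_one]
            exact_mod_cast hΔ
          · exact le_trans Finset.sdiff_subset hTQ'
          · have := Finset.card_sdiff_of_subset (Finset.singleton_subset_iff.mpr hy)
            simp only [Finset.card_singleton] at this
            omega
    · have : Q = ∅ := Finset.not_nonempty_iff_eq_empty.mp hQ
      subst this
      have : T = ∅ := Finset.subset_empty.mp hTQ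
      subst this
      rw [greedy, dif_neg hQ]
      simp

theorem stmt_2 {E : Type} [DecidableEq E] [Fintype E]
    (F : Finset E → ℝ) (hFnn : ∀ S, 0 ≤ F S) (hF0 : F ∅ = 0)
    (hFmono : ∀ S T : Finset E, S ⊆ T → F S ≤ F T)
    (hFsub : ∀ S T : Finset E, S ⊆ T → ∀ e : E,
      F (insert e T) - F T ≤ F (insert e S) - F S)
    (G : SimpleGraph E) [DecidableRel G.Adj]
    (Δ : ℕ) (hΔ : 1 ≤ Δ) (hdeg : ∀ v : E, G.degree v ≤ Δ)
    (k : ℕ) (Sstar : Finset E)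
    (hind : ∀ a ∈ Sstar, ∀ b ∈ Sstar, ¬ G.Adj a b)
    (hcard : Sstar.card ≤ k)
    (hopt : ∀ T : Finset E, (∀ a ∈ T, ∀ b ∈ T, ¬ G.Adj a b) → T.card ≤ k → F T ≤ F Sstar) :
    F Sstar ≤ (1 + (Δ : ℝ)) * F (greedy F G k Finset.univ ∅) := by
  have hdeg2 : ∀ (x : E) (P : Finset E), (∀ y ∈ P, G.Adj x y) → P.card ≤ Δ := by
    intro x P hP
    have hsub : P ⊆ G.neighborFinset x := by
      intro y hy
      rw [SimpleGraph.mem_neighborFinset]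
      exact hP y hy
    calc P.card ≤ (G.neighborFinset x).card := Finset.card_le_card hsub
      _ = G.degree x := G.card_neighborFinset_eq_degree x
      _ ≤ Δ := hdeg x
  have h := greedy_key F hFmono hFsub G Δ hΔ hdeg2 k Finset.univ ∅ Sstar
    (Finset.subset_univ _) hcard
  rw [Finset.empty_union, hF0] at h
  linarith
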